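/- The vacuum vector state tr(a) = ⟨a δ_e, δ_e⟩ is a trace on the von Neumann algebra M generated by the semicircular elements L_j + L_j*: for all a, b ∈ M, ⟨(a ∘ b) δ_e, δ_e⟩ = ⟨(b ∘ a) δ_e, δ_e⟩. -/

import Mathlib

noncomputable section

/-- The Hilbert space `ℓ²(FreeMonoid (Fin N), ℂ)`. -/
abbrev FMH (N : ℕ) : Type := lp (fun _ : FreeMonoid (Fin N) => ℂ) 2

/-- The standard orthonormal basis vector `δ_w` at the word `w`. -/
noncomputable def delta (N : ℕ) (w : FreeMonoid (Fin N)) : FMH N :=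
  letI : DecidableEq (FreeMonoid (Fin N)) := Classical.decEq _
  lp.single 2 w 1

/-- The set of the semicircular generators `L_j + L_j*`, `j = 1, …, N`. -/
def semicircSet (N : ℕ) (L : FreeMonoid (Fin N) → (FMH N →L[ℂ] FMH N)) :
    Set (FMH N →L[ℂ] FMH N) :=
  {x | ∃ j : Fin N, x = L (FreeMonoid.of j) + ContinuousLinearMap.adjoint (L (FreeMonoid.of j))}

/-- The von Neumann algebra generated by `{L_j + L_j*}`: the double commutant of this
(self-adjoint) set inside the bounded operators on `H`. -/
def vnAlg (N : ℕ) (L : FreeMonoid (Fin N) → (FMH N →L[ℂ] FMH N)) :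
    StarSubalgebra ℂ (FMH N →L[ℂ] FMH N) :=
  StarSubalgebra.centralizer ℂ
    ((StarSubalgebra.centralizer ℂ (semicircSet N L) : StarSubalgebra ℂ (FMH N →L[ℂ] FMH N)) :
      Set (FMH N →L[ℂ] FMH N))

namespace VT

open scoped ComplexConjugate Classical ENNReal

variable {N : ℕ}

local notation "⟪" x ", " y "⟫" => @inner ℂ _ _ x y

lemma delta_apply (w v : FreeMonoid (Fin N)) :
    (delta N w : ∀ _ : FreeMonoid (Fin N), ℂ) v = if v = w then 1 else 0 := by
  classical
  rw [delta, lp.single_apply]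
  split_ifs with h
  · subst h; simp
  · simp [Pi.single_apply, h]

lemma inner_delta_left (w : FreeMonoid (Fin N)) (f : FMH N) :
    ⟪delta N w, f⟫ = f w := by
  classical
  rw [delta, lp.inner_single_left]
  simp [RCLike.inner_apply]

lemma inner_delta_right (w : FreeMonoid (Fin N)) (f : FMH N) :
    ⟪f, delta N w⟫ = conj (f w) := by
  classical
  rw [delta, lp.inner_single_right]
  simp [RCLike.inner_apply]

lemma inner_delta_delta (w v : FreeMonoid (Fin N)) :
    ⟪delta N w, delta N v⟫ = if w = v then 1 else 0 := by
  rw [inner_delta_left, delta_apply]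

lemma coord_eq (f : FMH N) (w : FreeMonoid (Fin N)) : f w = ⟪delta N w, f⟫ :=
  (inner_delta_left w f).symm

lemma ext_coord {f g : FMH N} (h : ∀ w, (f : ∀ _ : FreeMonoid (Fin N), ℂ) w = g w) : f = g :=
  lp.ext (funext h)

lemma ext_basis {T U : FMH N →L[ℂ] FMH N}
    (h : ∀ w, T (delta N w) = U (delta N w)) : T = U := by
  refine ContinuousLinearMap.ext fun ξ => ?_
  have hs : HasSum (fun w : FreeMonoid (Fin N) => lp.single 2 w (ξ w)) ξ :=
    lp.hasSum_single ENNReal.ofNat_ne_top ξ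
  have h1 : HasSum (fun w : FreeMonoid (Fin N) => T (lp.single 2 w (ξ w))) (T ξ) :=
    T.hasSum hs
  have h2 : HasSum (fun w : FreeMonoid (Fin N) => U (lp.single 2 w (ξ w))) (U ξ) :=
    U.hasSum hs
  refine h1.unique ?_
  refine HasSum.congr_fun h2 fun w => ?_
  have e1 : lp.single (E := fun _ : FreeMonoid (Fin N) => ℂ) 2 w (ξ w) = ξ w • delta N w := by
    rw [delta]
    rw [← lp.single_smul]
    norm_num
  rw [e1, map_smul, map_smul, h w]


/-! ### word reversal and the unitary V -/

lemma word_cases (w : FreeMonoid (Fin N)) :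
    w = 1 ∨ ∃ (j : Fin N) (t : FreeMonoid (Fin N)), w = FreeMonoid.of j * t := by
  rcases h : FreeMonoid.toList w with _ | ⟨j, t⟩
  · left
    exact FreeMonoid.toList.injective (by simpa using h)
  · right
    exact ⟨j, FreeMonoid.ofList t, FreeMonoid.toList.injective (by simpa using h)⟩

def revE : FreeMonoid (Fin N) ≃ FreeMonoid (Fin N) :=
  ⟨FreeMonoid.reverse, FreeMonoid.reverse,
    fun _ => FreeMonoid.reverse_reverse, fun _ => FreeMonoid.reverse_reverse⟩

lemma memℓp_rev (f : FMH N) :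
    Memℓp (fun w : FreeMonoid (Fin N) => f (FreeMonoid.reverse w)) 2 := by
  apply memℓp_gen
  have h := (lp.memℓp f).summable (by norm_num : 0 < (2 : ℝ≥0∞).toReal)
  exact ((revE (N := N)).summable_iff (f := fun v => ‖f v‖ ^ (2 : ℝ≥0∞).toReal)).2 h


def Vfun (f : FMH N) : FMH N := ⟨fun w => f (FreeMonoid.reverse w), memℓp_rev f⟩

@[simp] lemma Vfun_apply (f : FMH N) (w : FreeMonoid (Fin N)) :
    (Vfun f : ∀ _ : FreeMonoid (Fin N), ℂ) w = f (FreeMonoid.reverse w) := rfl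

def Vl : FMH N →ₗ[ℂ] FMH N where
  toFun := Vfun
  map_add' f g := ext_coord fun w => by simp
  map_smul' c f := ext_coord fun w => by simp

lemma norm_Vfun (f : FMH N) : ‖Vfun f‖ = ‖f‖ := by
  have hp : 0 < (2 : ℝ≥0∞).toReal := by norm_num
  refine Real.rpow_left_injOn hp.ne' (lp.norm_nonneg' _) (lp.norm_nonneg' _) ?_
  show ‖Vfun f‖ ^ (2 : ℝ≥0∞).toReal = ‖f‖ ^ (2 : ℝ≥0∞).toReal
  rw [lp.norm_rpow_eq_tsum hp, lp.norm_rpow_eq_tsum hp]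
  exact (revE (N := N)).tsum_eq (fun w => ‖f w‖ ^ (2 : ℝ≥0∞).toReal)

def Vc : FMH N →L[ℂ] FMH N :=
  Vl.mkContinuous 1 (fun f => by rw [show Vl f = Vfun f from rfl, norm_Vfun]; simp)

@[simp] lemma Vc_apply (f : FMH N) (w : FreeMonoid (Fin N)) :
    (Vc f : ∀ _ : FreeMonoid (Fin N), ℂ) w = f (FreeMonoid.reverse w) := rfl

lemma Vc_delta (w : FreeMonoid (Fin N)) :
    Vc (delta N w) = delta N (FreeMonoid.reverse w) := by
  refine ext_coord fun v => ?_
  rw [Vc_apply, delta_apply, delta_apply]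
  refine if_congr ?_ rfl rfl
  constructor
  · rintro rfl; exact FreeMonoid.reverse_reverse.symm
  · rintro rfl; exact FreeMonoid.reverse_reverse

lemma Vc_Vc (f : FMH N) : Vc (Vc f) = f :=
  ext_coord fun w => by simp [FreeMonoid.reverse_reverse]

lemma Vc_mul_Vc : (Vc : FMH N →L[ℂ] FMH N) * Vc = 1 :=
  ContinuousLinearMap.ext fun f => Vc_Vc f

lemma inner_Vc (f g : FMH N) : ⟪Vc f, g⟫ = ⟪f, Vc g⟫ := by
  rw [lp.inner_eq_tsum, lp.inner_eq_tsum]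
  have := (revE (N := N)).tsum_eq
    (fun w => (inner ℂ ((f : ∀ _ : FreeMonoid (Fin N), ℂ) w)
      ((Vc g : ∀ _ : FreeMonoid (Fin N), ℂ) w) : ℂ))
  rw [← this]
  refine tsum_congr fun w => ?_
  simp [revE, FreeMonoid.reverse_reverse]

lemma adjoint_Vc : ContinuousLinearMap.adjoint (Vc : FMH N →L[ℂ] FMH N) = Vc :=
  ((ContinuousLinearMap.eq_adjoint_iff Vc Vc).2 fun x y => inner_Vc x y).symm

lemma star_Vc : star (Vc : FMH N →L[ℂ] FMH N) = Vc := by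
  rw [ContinuousLinearMap.star_eq_adjoint, adjoint_Vc]


/-! ### the operators -/

section Ops

variable (L : FreeMonoid (Fin N) → (FMH N →L[ℂ] FMH N))

def AOp (j : Fin N) : FMH N →L[ℂ] FMH N :=
  ContinuousLinearMap.adjoint (L (FreeMonoid.of j))

def sOp (j : Fin N) : FMH N →L[ℂ] FMH N := L (FreeMonoid.of j) + AOp L j

def ROp (j : Fin N) : FMH N →L[ℂ] FMH N := Vc * L (FreeMonoid.of j) * Vc

def BOp (j : Fin N) : FMH N →L[ℂ] FMH N := Vc * AOp L j * Vc

def rOp (j : Fin N) : FMH N →L[ℂ] FMH N := ROp L j + BOp L j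

def Pop : FMH N →L[ℂ] FMH N := (innerSL ℂ (delta N 1)).smulRight (delta N 1)

lemma P_delta (h : FreeMonoid (Fin N)) :
    Pop (delta N h) = if h = 1 then delta N 1 else 0 := by
  rw [Pop, ContinuousLinearMap.smulRight_apply, innerSL_apply_apply, inner_delta_left, delta_apply]
  by_cases hh : h = 1
  · subst hh; simp
  · rw [if_neg (fun e => hh e.symm), if_neg hh, zero_smul]

lemma star_P : star (Pop : FMH N →L[ℂ] FMH N) = Pop := by
  rw [ContinuousLinearMap.star_eq_adjoint]
  refine ((ContinuousLinearMap.eq_adjoint_iff Pop Pop).2 fun x y => ?_).symm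
  simp only [Pop, ContinuousLinearMap.smulRight_apply, innerSL_apply_apply]
  rw [inner_smul_left, inner_smul_right, inner_conj_symm]
  ring

variable (hL : ∀ w h : FreeMonoid (Fin N), L w (delta N h) = delta N (w * h))

section
include hL

lemma A_coord (j : Fin N) (u v : FreeMonoid (Fin N)) :
    (AOp L j (delta N u) : ∀ _ : FreeMonoid (Fin N), ℂ) v
      = if u = FreeMonoid.of j * v then 1 else 0 := by
  rw [coord_eq, AOp, ContinuousLinearMap.adjoint_inner_right, hL, inner_delta_left, delta_apply]
  exact if_congr eq_comm rfl rfl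

lemma A_delta_one (j : Fin N) : AOp L j (delta N 1) = 0 := by
  refine ext_coord fun v => ?_
  rw [A_coord L hL]
  have : (1 : FreeMonoid (Fin N)) ≠ FreeMonoid.of j * v := fun h => by
    simpa using congrArg FreeMonoid.toList h
  simp [this]

lemma A_delta_cons (j i : Fin N) (h : FreeMonoid (Fin N)) :
    AOp L j (delta N (FreeMonoid.of i * h)) = if i = j then delta N h else 0 := by
  refine ext_coord fun v => ?_
  rw [A_coord L hL]
  by_cases hij : i = j
  · subst hij
    rw [if_pos rfl, delta_apply]
    refine if_congr ?_ rfl rfl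
    constructor
    · intro he
      have := congrArg FreeMonoid.toList he
      simp only [FreeMonoid.toList_mul, FreeMonoid.toList_of, List.cons_append,
        List.nil_append, List.cons.injEq] at this
      exact FreeMonoid.toList.injective this.2.symm
    · rintro rfl; rfl
  · rw [if_neg hij]
    have : FreeMonoid.of i * h ≠ FreeMonoid.of j * v := fun he => by
      have := congrArg FreeMonoid.toList he
      simp [FreeMonoid.toList_mul] at this
      exact hij this.1
    simp [this]

lemma s_delta (j : Fin N) (h : FreeMonoid (Fin N)) :
    sOp L j (delta N h) = delta N (FreeMonoid.of j * h) + AOp L j (delta N h) := by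
  rw [sOp, ContinuousLinearMap.add_apply, hL]

lemma R_delta (j : Fin N) (h : FreeMonoid (Fin N)) :
    ROp L j (delta N h) = delta N (h * FreeMonoid.of j) := by
  show Vc (L (FreeMonoid.of j) (Vc (delta N h))) = _
  rw [Vc_delta, hL, Vc_delta, FreeMonoid.reverse_mul, FreeMonoid.reverse_of,
    FreeMonoid.reverse_reverse]

lemma B_delta_one (j : Fin N) : BOp L j (delta N 1) = 0 := by
  show Vc (AOp L j (Vc (delta N 1))) = 0
  rw [Vc_delta, show FreeMonoid.reverse (1 : FreeMonoid (Fin N)) = 1 from rfl,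
    A_delta_one L hL]
  simp

lemma B_delta_snoc (j c : Fin N) (t : FreeMonoid (Fin N)) :
    BOp L j (delta N (t * FreeMonoid.of c)) = if c = j then delta N t else 0 := by
  show Vc (AOp L j (Vc (delta N (t * FreeMonoid.of c)))) = _
  rw [Vc_delta, FreeMonoid.reverse_mul, FreeMonoid.reverse_of, A_delta_cons L hL]
  split_ifs with hc
  · rw [Vc_delta, FreeMonoid.reverse_reverse]
  · simp

omit hL in
lemma word_cases_rev (w : FreeMonoid (Fin N)) :
    w = 1 ∨ ∃ (c : Fin N) (t : FreeMonoid (Fin N)), w = t * FreeMonoid.of c := by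
  rcases word_cases (FreeMonoid.reverse w) with h | ⟨c, t, h⟩
  · left
    have := congrArg FreeMonoid.reverse h
    rwa [FreeMonoid.reverse_reverse] at this
  · right
    refine ⟨c, FreeMonoid.reverse t, ?_⟩
    have := congrArg FreeMonoid.reverse h
    rwa [FreeMonoid.reverse_reverse, FreeMonoid.reverse_mul, FreeMonoid.reverse_of] at this

omit hL in
lemma one_ne_snoc (c : Fin N) (t : FreeMonoid (Fin N)) :
    t * FreeMonoid.of c ≠ 1 := fun he => by
  have := congrArg FreeMonoid.toList he
  simp [FreeMonoid.toList_mul] at this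

lemma comm1 (i j : Fin N) :
    L (FreeMonoid.of j) * ROp L i = ROp L i * L (FreeMonoid.of j) := by
  refine ext_basis fun h => ?_
  show L (FreeMonoid.of j) (ROp L i (delta N h)) = ROp L i (L (FreeMonoid.of j) (delta N h))
  rw [R_delta L hL, hL, hL, R_delta L hL, mul_assoc]

lemma comm2 (i j : Fin N) :
    BOp L i * L (FreeMonoid.of j)
      = L (FreeMonoid.of j) * BOp L i + (if i = j then Pop else 0) := by
  refine ext_basis fun h => ?_
  show BOp L i (L (FreeMonoid.of j) (delta N h))
    = L (FreeMonoid.of j) (BOp L i (delta N h))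
        + (if i = j then (Pop : FMH N →L[ℂ] FMH N) else 0) (delta N h)
  rw [apply_ite (fun T : FMH N →L[ℂ] FMH N => T (delta N h)), ContinuousLinearMap.zero_apply]
  rcases word_cases_rev h with rfl | ⟨c, t, rfl⟩
  · rw [hL, mul_one, B_delta_one L hL, map_zero, P_delta, if_pos rfl, zero_add]
    rw [show FreeMonoid.of j = 1 * FreeMonoid.of j from (one_mul _).symm, B_delta_snoc L hL]
    exact if_congr eq_comm rfl rfl
  · rw [hL, ← mul_assoc, B_delta_snoc L hL, B_delta_snoc L hL, P_delta,
      if_neg (one_ne_snoc c t)]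
    simp only [ite_self, add_zero]
    split_ifs with hc
    · rw [hL]
    · simp

omit hL in
lemma star_L (j : Fin N) : star (L (FreeMonoid.of j)) = AOp L j := by
  rw [ContinuousLinearMap.star_eq_adjoint]; rfl

omit hL in
lemma star_A (j : Fin N) : star (AOp L j) = L (FreeMonoid.of j) := by
  rw [ContinuousLinearMap.star_eq_adjoint, AOp, ContinuousLinearMap.adjoint_adjoint]

omit hL in
lemma star_s (j : Fin N) : star (sOp L j) = sOp L j := by
  rw [sOp, star_add, star_L, star_A, add_comm]

omit hL in
lemma star_R (i : Fin N) : star (ROp L i) = BOp L i := by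
  rw [ROp, BOp, star_mul, star_mul, star_Vc, star_L, mul_assoc]

omit hL in
lemma star_B (i : Fin N) : star (BOp L i) = ROp L i := by
  rw [ROp, BOp, star_mul, star_mul, star_Vc, star_A, mul_assoc]

lemma comm4 (i j : Fin N) :
    AOp L j * BOp L i = BOp L i * AOp L j := by
  have := congrArg star (comm1 L hL i j)
  rw [star_mul, star_mul, star_L, star_R L] at this
  exact this.symm

lemma comm3 (i j : Fin N) :
    AOp L j * ROp L i = ROp L i * AOp L j + (if i = j then Pop else 0) := by
  have := congrArg star (comm2 L hL i j)
  rwa [star_mul, star_add, star_mul, star_L, star_B L,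
    show star (if i = j then (Pop : FMH N →L[ℂ] FMH N) else 0) = if i = j then Pop else 0 by
      rw [apply_ite star, star_P, star_zero]] at this

lemma comm_sr (i j : Fin N) : Commute (sOp L j) (rOp L i) := by
  show sOp L j * rOp L i = rOp L i * sOp L j
  have h2 : L (FreeMonoid.of j) * BOp L i
      = BOp L i * L (FreeMonoid.of j) - (if i = j then Pop else 0) :=
    eq_sub_of_add_eq (by rw [comm2 L hL i j])
  simp only [sOp, rOp, add_mul, mul_add]
  rw [comm1 L hL i j, h2, comm3 L hL i j, comm4 L hL i j]
  abel

/-! ### the Wick polynomials Y -/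

def Y : List (Fin N) → (FMH N →L[ℂ] FMH N)
  | [] => 1
  | [j] => sOp L j
  | j :: i :: t => sOp L j * Y (i :: t) - if i = j then Y t else 0

omit hL in
lemma Y_nil : Y L [] = 1 := rfl

omit hL in
lemma Y_single (j : Fin N) : Y L [j] = sOp L j := rfl

omit hL in
lemma Y_cons2 (j i : Fin N) (t : List (Fin N)) :
    Y L (j :: i :: t) = sOp L j * Y L (i :: t) - if i = j then Y L t else 0 := rfl

def cY (u : List (Fin N)) (j : Fin N) : FMH N →L[ℂ] FMH N :=
  if u.getLast? = some j then Y L u.dropLast else 0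

omit hL in
lemma cY_nil (j : Fin N) : cY L [] j = 0 := by
  simp [cY]

omit hL in
lemma cY_single (a j : Fin N) : cY L [a] j = if j = a then 1 else 0 := by
  rw [cY]
  simp only [List.getLast?_singleton, Option.some.injEq, List.dropLast_singleton, Y_nil]
  exact if_congr eq_comm rfl rfl

omit hL in
lemma cY_cons2 (a b : Fin N) (t : List (Fin N)) (j : Fin N) :
    cY L (a :: b :: t) j = sOp L a * cY L (b :: t) j - (if b = a then cY L t j else 0) := by
  rcases t with _ | ⟨c, t'⟩
  · rw [cY, cY_single, cY_nil]
    simp only [List.getLast?_cons_cons, List.getLast?_singleton, Option.some.injEq,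
      List.dropLast_cons₂, List.dropLast_singleton, ite_self, sub_zero, mul_ite, mul_one, mul_zero]
    rw [Y_single]
    exact if_congr eq_comm rfl rfl
  · have hbt : cY L (b :: c :: t') j
        = if (c :: t').getLast? = some j then Y L (b :: (c :: t').dropLast) else 0 := by
      rw [cY]; simp only [List.getLast?_cons_cons, List.dropLast_cons₂]
    have habt : cY L (a :: b :: c :: t') j
        = if (c :: t').getLast? = some j then Y L (a :: b :: (c :: t').dropLast) else 0 := by
      rw [cY]; simp only [List.getLast?_cons_cons, List.dropLast_cons₂]
    have hct : cY L (c :: t') j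
        = if (c :: t').getLast? = some j then Y L (c :: t').dropLast else 0 := by
      rw [cY]
    rw [habt, hbt, hct]
    by_cases hj : (c :: t').getLast? = some j
    · rw [if_pos hj, if_pos hj, if_pos hj, Y_cons2]
    · rw [if_neg hj, if_neg hj, if_neg hj]
      simp

omit hL in
lemma YR (u : List (Fin N)) (j : Fin N) :
    Y L (u ++ [j]) = Y L u * sOp L j - cY L u j := by
  suffices h : ∀ (n : ℕ) (u : List (Fin N)), u.length ≤ n → ∀ j,
      Y L (u ++ [j]) = Y L u * sOp L j - cY L u j from h u.length u le_rfl j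
  intro n
  induction n with
  | zero =>
    intro u hu j
    rw [List.length_eq_zero_iff.1 (Nat.le_zero.1 hu)]
    rw [List.nil_append, Y_single, Y_nil, one_mul, cY_nil, sub_zero]
  | succ n ih =>
    intro u hu j
    match u with
    | [] => rw [List.nil_append, Y_single, Y_nil, one_mul, cY_nil, sub_zero]
    | [a] =>
      show Y L (a :: j :: []) = _
      rw [Y_cons2, Y_single, Y_single, Y_nil, cY_single]
    | a :: b :: t =>
      have h1 : Y L ((b :: t) ++ [j]) = Y L (b :: t) * sOp L j - cY L (b :: t) j :=
        ih (b :: t) (by simpa using Nat.le_of_succ_le_succ hu) j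
      have h2 : Y L (t ++ [j]) = Y L t * sOp L j - cY L t j :=
        ih t (le_trans (by simp) (Nat.le_of_succ_le_succ hu)) j
      show Y L (a :: ((b :: t) ++ [j])) = _
      rw [show a :: ((b :: t) ++ [j]) = a :: b :: (t ++ [j]) from rfl, Y_cons2, h2,
        show (b :: (t ++ [j])) = (b :: t) ++ [j] from rfl, h1, Y_cons2, cY_cons2]
      rw [show (if b = a then Y L t * sOp L j - cY L t j else 0)
          = (if b = a then Y L t * sOp L j else 0) - (if b = a then cY L t j else 0) from by
            split_ifs <;> simp]
      simp only [mul_sub, sub_mul, apply_ite (fun X : FMH N →L[ℂ] FMH N => X * sOp L j),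
        zero_mul, ← mul_assoc]
      abel

omit hL in
lemma star_Y (u : List (Fin N)) : star (Y L u) = Y L u.reverse := by
  suffices h : ∀ (n : ℕ) (u : List (Fin N)), u.length ≤ n →
      star (Y L u) = Y L u.reverse from h u.length u le_rfl
  intro n
  induction n with
  | zero =>
    intro u hu
    rw [List.length_eq_zero_iff.1 (Nat.le_zero.1 hu)]
    simp [Y_nil]
  | succ n ih =>
    intro u hu
    match u with
    | [] => simp [Y_nil]
    | [j] => simp [Y_single, star_s L j]
    | j :: i :: t =>
      have h1 : star (Y L (i :: t)) = Y L (i :: t).reverse :=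
        ih (i :: t) (by simpa using Nat.le_of_succ_le_succ hu)
      have h2 : star (Y L t) = Y L t.reverse :=
        ih t (le_trans (by simp) (Nat.le_of_succ_le_succ hu))
      rw [Y_cons2, star_sub, star_mul, star_s L j, h1, apply_ite star, star_zero, h2,
        show (j :: i :: t).reverse = ((i :: t).reverse) ++ [j] from List.reverse_cons,
        YR L]
      congr 1
      rw [show (i :: t).reverse = t.reverse ++ [i] from List.reverse_cons, cY,
        List.getLast?_concat, List.dropLast_concat]
      simp only [Option.some.injEq]

section
include hL

lemma Y_delta_one (u : List (Fin N)) :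
    Y L u (delta N 1) = delta N (FreeMonoid.ofList u) := by
  suffices h : ∀ (n : ℕ) (u : List (Fin N)), u.length ≤ n →
      Y L u (delta N 1) = delta N (FreeMonoid.ofList u) from h u.length u le_rfl
  intro n
  induction n with
  | zero =>
    intro u hu
    rw [List.length_eq_zero_iff.1 (Nat.le_zero.1 hu), Y_nil, ContinuousLinearMap.one_apply]
    rfl
  | succ n ih =>
    intro u hu
    match u with
    | [] => rw [Y_nil, ContinuousLinearMap.one_apply]; rfl
    | [j] =>
      rw [Y_single, s_delta L hL, A_delta_one L hL, add_zero, mul_one]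
      rfl
    | j :: i :: t =>
      have h1 := ih (i :: t) (by simpa using Nat.le_of_succ_le_succ hu)
      have h2 := ih t (le_trans (by simp) (Nat.le_of_succ_le_succ hu))
      rw [Y_cons2, ContinuousLinearMap.sub_apply, ContinuousLinearMap.mul_apply,
        apply_ite (fun X : FMH N →L[ℂ] FMH N => X (delta N 1)),
        ContinuousLinearMap.zero_apply, h1, h2, s_delta L hL,
        show FreeMonoid.ofList (i :: t) = FreeMonoid.of i * FreeMonoid.ofList t from rfl,
        A_delta_cons L hL]
      rw [show FreeMonoid.of j * (FreeMonoid.of i * FreeMonoid.ofList t)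
          = FreeMonoid.ofList (j :: i :: t) from rfl]
      abel

end

/-! ### conjugated polynomials zOp and the commutant -/

def zOp (u : List (Fin N)) : FMH N →L[ℂ] FMH N := Vc * Y L u * Vc

omit hL in
lemma conj_mul (X W : FMH N →L[ℂ] FMH N) :
    (Vc * X * Vc) * (Vc * W * Vc) = Vc * (X * W) * Vc := by
  have h : (Vc : FMH N →L[ℂ] FMH N) * Vc = 1 := Vc_mul_Vc
  calc (Vc * X * Vc) * (Vc * W * Vc) = Vc * (X * ((Vc * Vc) * (W * Vc))) := by
        simp only [mul_assoc]
      _ = Vc * (X * (W * Vc)) := by rw [h, one_mul]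
      _ = Vc * (X * W) * Vc := by simp only [mul_assoc]

omit hL in
lemma zOp_nil : zOp L [] = 1 := by
  rw [zOp, Y_nil, mul_one, Vc_mul_Vc]

omit hL in
lemma zOp_single (j : Fin N) : zOp L [j] = rOp L j := by
  rw [zOp, Y_single, sOp, rOp, ROp, BOp, mul_add, add_mul]

omit hL in
lemma zOp_cons2 (j i : Fin N) (t : List (Fin N)) :
    zOp L (j :: i :: t) = zOp L [j] * zOp L (i :: t) - if i = j then zOp L t else 0 := by
  rw [zOp, zOp, zOp, zOp, Y_single, Y_cons2, conj_mul]
  rw [mul_sub, sub_mul]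
  congr 1
  rw [apply_ite (fun X : FMH N →L[ℂ] FMH N => Vc * X * Vc), mul_zero, zero_mul]

lemma comm_sz (u : List (Fin N)) (j : Fin N) : Commute (sOp L j) (zOp L u) := by
  suffices h : ∀ (n : ℕ) (u : List (Fin N)), u.length ≤ n →
      Commute (sOp L j) (zOp L u) from h u.length u le_rfl
  intro n
  induction n with
  | zero =>
    intro u hu
    rw [List.length_eq_zero_iff.1 (Nat.le_zero.1 hu), zOp_nil]
    exact Commute.one_right _
  | succ n ih =>
    intro u hu
    match u with
    | [] => rw [zOp_nil]; exact Commute.one_right _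
    | [i] => rw [zOp_single]; exact comm_sr L hL i j
    | i :: c :: t =>
      have h1 := ih (c :: t) (by simpa using Nat.le_of_succ_le_succ hu)
      have h2 := ih t (le_trans (by simp) (Nat.le_of_succ_le_succ hu))
      rw [zOp_cons2]
      refine Commute.sub_right (Commute.mul_right ?_ h1) ?_
      · rw [zOp_single]; exact comm_sr L hL i j
      · split_ifs
        · exact h2
        · exact Commute.zero_right _

omit hL in
lemma star_z (u : List (Fin N)) : star (zOp L u) = zOp L u.reverse := by
  rw [zOp, zOp, star_mul, star_mul, star_Vc, star_Y, mul_assoc]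

include hL

lemma z_delta (u : List (Fin N)) :
    zOp L u (delta N 1) = delta N (FreeMonoid.reverse (FreeMonoid.ofList u)) := by
  show Vc (Y L u (Vc (delta N 1))) = _
  rw [show Vc (delta N 1) = delta N 1 from Vc_delta 1, Y_delta_one L hL, Vc_delta]

lemma z_mem (u : List (Fin N)) :
    zOp L u ∈ StarSubalgebra.centralizer ℂ (semicircSet N L) := by
  rw [StarSubalgebra.mem_centralizer_iff]
  rintro g hg0
  obtain ⟨j, rfl⟩ := hg0
  have hg : L (FreeMonoid.of j) + ContinuousLinearMap.adjoint (L (FreeMonoid.of j))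
      = sOp L j := rfl
  rw [hg, star_s L]
  exact ⟨(comm_sz L hL u j).eq, (comm_sz L hL u j).eq⟩

lemma momC {m : FMH N →L[ℂ] FMH N} (hm : m ∈ vnAlg N L) (w : FreeMonoid (Fin N)) :
    ⟪delta N 1, m (delta N w)⟫ = ⟪delta N (FreeMonoid.reverse w), m (delta N 1)⟫ := by
  set u : List (Fin N) := FreeMonoid.toList (FreeMonoid.reverse w) with hu
  have hz : zOp L u (delta N 1) = delta N w := by
    rw [z_delta L hL]
    show delta N (FreeMonoid.reverse (FreeMonoid.reverse w)) = _
    rw [FreeMonoid.reverse_reverse]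
  have hm2 : m ∈ StarSubalgebra.centralizer ℂ
      ((StarSubalgebra.centralizer ℂ (semicircSet N L) :
        StarSubalgebra ℂ (FMH N →L[ℂ] FMH N)) : Set (FMH N →L[ℂ] FMH N)) := hm
  have hcomm : zOp L u * m = m * zOp L u :=
    ((StarSubalgebra.mem_centralizer_iff (R := ℂ)).mp hm2 (zOp L u)
      (SetLike.mem_coe.2 (z_mem L hL u))).1
  have h1 : m (delta N w) = zOp L u (m (delta N 1)) := by
    conv_lhs => rw [← hz]
    show (m * zOp L u) (delta N 1) = (zOp L u * m) (delta N 1)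
    rw [hcomm]
  rw [h1, ← ContinuousLinearMap.adjoint_inner_left (zOp L u),
    ← ContinuousLinearMap.star_eq_adjoint, star_z, z_delta L hL]
  congr 2
  show FreeMonoid.reverse (FreeMonoid.reverse (FreeMonoid.reverse w)) = FreeMonoid.reverse w
  rw [FreeMonoid.reverse_reverse]

end

end Ops

end VT

open VT in
/-- The vacuum vector state is a trace on the von Neumann algebra `M` generated by the
semicircular elements: `⟨(a∘b) δ_e, δ_e⟩ = ⟨(b∘a) δ_e, δ_e⟩` for all `a, b ∈ M`. -/
theorem vacuum_state_is_trace (N : ℕ) (hN : 0 < N)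
    (L : FreeMonoid (Fin N) → (FMH N →L[ℂ] FMH N))
    (hL : ∀ w h : FreeMonoid (Fin N), L w (delta N h) = delta N (w * h))
    (a b : FMH N →L[ℂ] FMH N) (ha : a ∈ vnAlg N L) (hb : b ∈ vnAlg N L) :
    (inner ℂ ((a.comp b) (delta N 1)) (delta N 1) : ℂ) =
      (inner ℂ ((b.comp a) (delta N 1)) (delta N 1) : ℂ) := by
  classical
  rw [inner_delta_right, inner_delta_right]
  congr 1
  have key : ∀ (m k : FMH N →L[ℂ] FMH N), m ∈ vnAlg N L →
      ((m.comp k) (delta N 1) : ∀ _ : FreeMonoid (Fin N), ℂ) 1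
        = ∑' w : FreeMonoid (Fin N),
            ((m (delta N 1) : ∀ _ : FreeMonoid (Fin N), ℂ) (FreeMonoid.reverse w))
              * ((k (delta N 1) : ∀ _ : FreeMonoid (Fin N), ℂ) w) := by
    intro m k hm
    rw [ContinuousLinearMap.comp_apply, coord_eq,
      ← ContinuousLinearMap.adjoint_inner_left m, lp.inner_eq_tsum]
    refine tsum_congr fun w => ?_
    rw [RCLike.inner_apply, mul_comm]
    congr 1
    rw [coord_eq (ContinuousLinearMap.adjoint m (delta N 1)) w,
      ContinuousLinearMap.adjoint_inner_right, inner_conj_symm, momC L hL hm w,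
      inner_delta_left]
  rw [key a b ha, key b a hb]
  rw [← (revE (N := N)).tsum_eq (fun w : FreeMonoid (Fin N) =>
    ((b (delta N 1) : ∀ _ : FreeMonoid (Fin N), ℂ) (FreeMonoid.reverse w))
      * ((a (delta N 1) : ∀ _ : FreeMonoid (Fin N), ℂ) w))]
  refine tsum_congr fun w => ?_
  show (a (delta N 1) : ∀ _ : FreeMonoid (Fin N), ℂ) (FreeMonoid.reverse w)
        * (b (delta N 1) : ∀ _ : FreeMonoid (Fin N), ℂ) w
      = (b (delta N 1) : ∀ _ : FreeMonoid (Fin N), ℂ)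
          (FreeMonoid.reverse (FreeMonoid.reverse w))
        * (a (delta N 1) : ∀ _ : FreeMonoid (Fin N), ℂ) (FreeMonoid.reverse w)
  rw [FreeMonoid.reverse_reverse, mul_comm]
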